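/- Let (A,D) be a dependence graph and let (A_j, D_j), j ∈ J, be a (possibly infinite) family of subgraphs of (A,D) with A = ⋃_{j∈J} A_j and D = ⋃_{j∈J} D_j, and suppose that every a ∈ A belongs to A_j for only finitely many j ∈ J. Then for every t ∈ M(A,D) the set {j ∈ J : π_{(A_j,D_j)}(t) ≠ 1} is finite, and the resulting monoid homomorphism from M(A,D) into the weak direct product ⊕_{j∈J} M(A_j,D_j) = {(w_j)_{j∈J} ∈ ∏_{j∈J} M(A_j,D_j) : w_j = 1 for all but finitely many j} is injective. -/

import Mathlib

/-- The pairs generating the trace congruence: `a·b ~ b·a` for independent letters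
(`¬ D a b`). -/
def TraceRel (A : Type*) (D : A → A → Prop) :
    FreeMonoid A → FreeMonoid A → Prop := fun x y =>
  ∃ a b : A, ¬ D a b ∧ x = FreeMonoid.of a * FreeMonoid.of b ∧
    y = FreeMonoid.of b * FreeMonoid.of a

/-- The trace congruence on the free monoid over `A` w.r.t. the dependence relation
`D`. -/
def traceCon (A : Type*) (D : A → A → Prop) : Con (FreeMonoid A) :=
  conGen (TraceRel A D)

/-- The trace monoid `M(A,D)`: the quotient of the free monoid on `A` by the
congruence generated by `a·b = b·a` for all `a, b` with `¬ D a b`. -/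
abbrev TraceMonoid (A : Type*) (D : A → A → Prop) := (traceCon A D).Quotient

attribute [local instance] Classical.propDecidable

namespace Aux12

variable {A : Type*}

/-- Bool predicate: membership in the pair {a,b}. -/
noncomputable def pb (a b : A) : A → Bool := fun c => decide (c = a ∨ c = b)

/-- Any filter that never keeps both letters of an independent pair is
invariant under the trace congruence. -/
theorem filter_invariant {D : A → A → Prop} (p : A → Bool)
    (hp : ∀ c d, ¬ D c d → ¬(p c = true ∧ p d = true))
    {u v : FreeMonoid A} (h : ConGen.Rel (TraceRel A D) u v) :
    u.toList.filter p = v.toList.filter p := by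
  induction h with
  | of x y hxy =>
      obtain ⟨c, d, hcd, rfl, rfl⟩ := hxy
      have := hp c d hcd
      by_cases hc : p c = true <;> by_cases hd : p d = true <;>
        simp_all [FreeMonoid.toList_mul, FreeMonoid.toList_of, List.filter]
  | refl => rfl
  | symm _ ih => exact ih.symm
  | trans _ _ ih1 ih2 => exact ih1.trans ih2
  | mul _ _ ih1 ih2 =>
      simp only [FreeMonoid.toList_mul, List.filter_append, ih1, ih2]

theorem pb_invariant {D : A → A → Prop} (hrefl : ∀ a, D a a)
    (hsymm : ∀ a b, D a b → D b a) {a b : A} (hab : D a b)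
    {u v : FreeMonoid A} (h : ConGen.Rel (TraceRel A D) u v) :
    u.toList.filter (pb a b) = v.toList.filter (pb a b) := by
  refine filter_invariant _ (fun c d hcd => ?_) h
  rintro ⟨hc, hd⟩
  simp only [pb, decide_eq_true_eq] at hc hd
  rcases hc with rfl | rfl <;> rcases hd with rfl | rfl <;>
    first | exact hcd (hrefl _) | exact hcd hab | exact hcd (hsymm _ _ hab)

/-- first-occurrence split -/
theorem exists_split {a : A} {l : List A} (h : a ∈ l) :
    ∃ x y, l = x ++ a :: y ∧ a ∉ x := by
  induction l with
  | nil => simp at h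
  | cons c l ih =>
      by_cases hca : c = a
      · exact ⟨[], l, by simp [hca], by simp⟩
      · have : a ∈ l := by
          rcases List.mem_cons.mp h with h' | h'
          · exact absurd h'.symm hca
          · exact h'
        obtain ⟨x, y, rfl, hax⟩ := ih this
        refine ⟨c :: x, y, rfl, ?_⟩
        intro hm
        rcases List.mem_cons.mp hm with h' | h'
        · exact hca h'.symm
        · exact hax h'

/-- moving a letter independent from everything before it to the front -/
theorem move_front {D : A → A → Prop} (a : A) :
    ∀ x : List A, (∀ b ∈ x, ¬ D b a) → ∀ y : List A,
      ConGen.Rel (TraceRel A D) (FreeMonoid.ofList (x ++ a :: y))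
        (FreeMonoid.ofList (a :: (x ++ y))) := by
  intro x
  induction x with
  | nil => intro _ y; exact ConGen.Rel.refl _
  | cons b x ih =>
      intro hx y
      have h1 : ConGen.Rel (TraceRel A D) (FreeMonoid.ofList (x ++ a :: y))
          (FreeMonoid.ofList (a :: (x ++ y))) :=
        ih (fun c hc => hx c (List.mem_cons_of_mem _ hc)) y
      have h2 : ConGen.Rel (TraceRel A D)
          (FreeMonoid.of b * FreeMonoid.ofList (x ++ a :: y))
          (FreeMonoid.of b * FreeMonoid.ofList (a :: (x ++ y))) :=
        ConGen.Rel.mul (ConGen.Rel.refl _) h1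
      have h3 : ConGen.Rel (TraceRel A D)
          (FreeMonoid.of b * FreeMonoid.of a)
          (FreeMonoid.of a * FreeMonoid.of b) :=
        ConGen.Rel.of _ _ ⟨b, a, hx b (List.mem_cons_self), rfl, rfl⟩
      have h4 : ConGen.Rel (TraceRel A D)
          ((FreeMonoid.of b * FreeMonoid.of a) * FreeMonoid.ofList (x ++ y))
          ((FreeMonoid.of a * FreeMonoid.of b) * FreeMonoid.ofList (x ++ y)) :=
        ConGen.Rel.mul h3 (ConGen.Rel.refl _)
      have e1 : FreeMonoid.ofList ((b :: x) ++ a :: y) =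
          FreeMonoid.of b * FreeMonoid.ofList (x ++ a :: y) := rfl
      have e2 : FreeMonoid.of b * FreeMonoid.ofList (a :: (x ++ y)) =
          (FreeMonoid.of b * FreeMonoid.of a) * FreeMonoid.ofList (x ++ y) := by
        rw [FreeMonoid.ofList_cons, ← mul_assoc]
      have e3 : (FreeMonoid.of a * FreeMonoid.of b) * FreeMonoid.ofList (x ++ y) =
          FreeMonoid.ofList (a :: ((b :: x) ++ y)) := by
        rw [mul_assoc]
        rfl
      rw [e1]
      exact (h2.trans (e2 ▸ h4)).trans (e3 ▸ ConGen.Rel.refl _)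

/-- Projection lemma: equality of all pair projections implies trace equality. -/
theorem key {D : A → A → Prop} (hrefl : ∀ a, D a a) (hsymm : ∀ a b, D a b → D b a) :
    ∀ u v : List A,
      (∀ a b, D a b → u.filter (pb a b) = v.filter (pb a b)) →
      ConGen.Rel (TraceRel A D) (FreeMonoid.ofList u) (FreeMonoid.ofList v) := by
  intro u
  induction u with
  | nil =>
      intro v hv
      have : v = [] := by
        cases v with
        | nil => rfl
        | cons c v' =>
            have := hv c c (hrefl c)
            simp [pb, List.filter] at this
      rw [this]; exact ConGen.Rel.refl _
  | cons a u' ih =>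
      intro v hv
      -- a occurs in v
      have hav : a ∈ v := by
        have := hv a a (hrefl a)
        have h1 : pb a a a = true := by simp [pb]
        have : a ∈ v.filter (pb a a) := by
          rw [← this]; simp [List.filter, h1]
        exact (List.mem_filter.mp this).1
      obtain ⟨x, y, rfl, hax⟩ := exists_split hav
      -- every letter in x is independent of a
      have hxind : ∀ b ∈ x, ¬ D b a := by
        intro b hb hDba
        have hDab : D a b := hsymm _ _ hDba
        have hfe := hv a b hDab
        have hbx : b ∈ x.filter (pb a b) :=
          List.mem_filter.mpr ⟨hb, by simp [pb]⟩
        have hpa : pb a b a = true := by simp [pb]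
        rw [List.filter_append] at hfe
        obtain ⟨c, r, hcr⟩ := List.exists_cons_of_ne_nil
          (List.ne_nil_of_mem hbx)
        rw [hcr] at hfe
        simp only [List.filter, hpa, List.filter_cons, if_pos] at hfe
        have hfe' : a :: List.filter (pb a b) u' = c :: (r ++ a :: List.filter (pb a b) y) := by
          simpa [hpa] using hfe
        have hca : c = a := (List.cons.injEq _ _ _ _ ▸ hfe').1.symm
        have : c ∈ x := (List.mem_filter.mp (hcr ▸ (List.mem_cons_self (a := c) (l := r)))).1
        exact hax (hca ▸ this)
      have hmv : ConGen.Rel (TraceRel A D) (FreeMonoid.ofList (x ++ a :: y))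
          (FreeMonoid.ofList (a :: (x ++ y))) := move_front a x hxind y
      -- filters of u' and x ++ y agree
      have hv' : ∀ a' b', D a' b' →
          u'.filter (pb a' b') = (x ++ y).filter (pb a' b') := by
        intro a' b' hD
        have h1 := hv a' b' hD
        have h2 : (x ++ a :: y).filter (pb a' b') =
            (a :: (x ++ y)).filter (pb a' b') :=
          pb_invariant hrefl hsymm hD hmv
        rw [h2] at h1
        by_cases hpa : pb a' b' a = true
        · simp only [List.filter_cons, if_pos hpa] at h1
          exact (List.cons.injEq _ _ _ _ ▸ h1).2
        · simpa [List.filter_cons, hpa] using h1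
      have hrec := ih (x ++ y) hv'
      have : ConGen.Rel (TraceRel A D) (FreeMonoid.ofList (a :: u'))
          (FreeMonoid.ofList (a :: (x ++ y))) :=
        ConGen.Rel.mul (ConGen.Rel.refl (FreeMonoid.of a)) hrec
      exact this.trans hmv.symm


attribute [local instance] Classical.propDecidable

theorem projL_filter {A : Type*} (S : Set A) (p : A → Bool)
    (hps : ∀ c, p c = true → c ∈ S) :
    ∀ l : List A,
      ((l.filterMap (fun a => if h : a ∈ S then some (⟨a, h⟩ : S) else none)).filter
          (fun c => p c.1)).map Subtype.val = l.filter p := by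
  intro l
  induction l with
  | nil => rfl
  | cons a l ih =>
      by_cases h : a ∈ S
      · by_cases hp : p a = true <;>
          simp [List.filterMap_cons, h, List.filter_cons, hp, ih]
      · have hpa : ¬ p a = true := fun hpa => h (hps a hpa)
        simp [List.filterMap_cons, h, List.filter_cons, hpa, ih]

end Aux12

/-- Let `(A,D)` be a dependence graph, `(A' j, D' j)`, `j ∈ J`, a
(possibly infinite) family of subgraphs covering `(A,D)` (`A = ⋃ⱼ A' j`,
`D = ⋃ⱼ D' j`), such that every letter `a ∈ A` lies in `A' j` for only finitely many
`j`. Let `π j` be the canonical projections. Then for every `t ∈ M(A,D)` the set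
`{j : π j t ≠ 1}` is finite, and the resulting homomorphism
`t ↦ (π j t)ⱼ` into the weak direct product
`{(w j)ⱼ : w j = 1 for all but finitely many j}` is injective. -/
theorem stmt12 {A : Type*} (D : A → A → Prop)
    (hD_refl : ∀ a, D a a) (hD_symm : ∀ a b, D a b → D b a)
    {J : Type*}
    (A' : J → Set A) (D' : J → A → A → Prop)
    (hsub : ∀ j a b, D' j a b → D a b)
    (hsupp : ∀ j a b, D' j a b → a ∈ A' j ∧ b ∈ A' j)
    (hrefl' : ∀ j, ∀ a ∈ A' j, D' j a a)
    (hsymm' : ∀ j a b, D' j a b → D' j b a)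
    (hcoverA : ∀ a : A, ∃ j, a ∈ A' j)
    (hcoverD : ∀ a b : A, D a b ↔ ∃ j, D' j a b)
    (hfin_letter : ∀ a : A, {j : J | a ∈ A' j}.Finite)
    (π : ∀ j, TraceMonoid A D →* TraceMonoid (A' j) (fun x y => D' j x y))
    (hπ_mem : ∀ j (a : A) (h : a ∈ A' j),
      π j ((FreeMonoid.of a : FreeMonoid A) : TraceMonoid A D) =
        ((FreeMonoid.of (⟨a, h⟩ : A' j) : FreeMonoid (A' j)) :
          TraceMonoid (A' j) (fun x y => D' j x y)))
    (hπ_not : ∀ j (a : A), a ∉ A' j →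
      π j ((FreeMonoid.of a : FreeMonoid A) : TraceMonoid A D) = 1) :
    ∃ hfin : ∀ t : TraceMonoid A D, {j : J | π j t ≠ 1}.Finite,
      Function.Injective (fun t : TraceMonoid A D =>
        (⟨fun j => π j t, hfin t⟩ :
          {w : ∀ j, TraceMonoid (A' j) (fun x y => D' j x y) //
            {j : J | w j ≠ 1}.Finite})) := by
  classical
  set projL : ∀ j, List A → List (A' j) := fun j l =>
    l.filterMap (fun a => if h : a ∈ A' j then some ⟨a, h⟩ else none) with hprojL
  have hπL : ∀ j (l : List A),
      π j ((FreeMonoid.ofList l : FreeMonoid A) : TraceMonoid A D) =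
        ((FreeMonoid.ofList (projL j l) : FreeMonoid (A' j)) :
          TraceMonoid (A' j) (fun x y => D' j x y)) := by
    intro j l
    induction l with
    | nil =>
        have : projL j [] = [] := rfl
        rw [this, FreeMonoid.ofList_nil, FreeMonoid.ofList_nil, Con.coe_one,
          Con.coe_one, map_one]
    | cons a l ih =>
        rw [FreeMonoid.ofList_cons, Con.coe_mul, map_mul, ih]
        by_cases h : a ∈ A' j
        · have hc : projL j (a :: l) = ⟨a, h⟩ :: projL j l := by
            simp [hprojL, List.filterMap_cons, h]
          rw [hπ_mem j a h, hc, FreeMonoid.ofList_cons, Con.coe_mul]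
        · have hc : projL j (a :: l) = projL j l := by
            simp [hprojL, List.filterMap_cons, h]
          rw [hπ_not j a h, one_mul, hc]
  have hrep : ∀ t : TraceMonoid A D, ∃ u : FreeMonoid A,
      (u : TraceMonoid A D) = t := fun t => Quotient.exists_rep t
  have hfin : ∀ t : TraceMonoid A D, {j : J | π j t ≠ 1}.Finite := by
    intro t
    obtain ⟨u, rfl⟩ := hrep t
    have hsubset : {j : J | π j ↑u ≠ 1} ⊆
        ⋃ a ∈ {x | x ∈ FreeMonoid.toList u}, {j : J | a ∈ A' j} := by
      intro j hj
      by_contra hcon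
      simp only [Set.mem_iUnion, Set.mem_setOf_eq, not_exists] at hcon
      have hnone : projL j (FreeMonoid.toList u) = [] := by
        rw [hprojL]
        rw [List.filterMap_eq_nil_iff]
        intro a ha
        rw [dif_neg (by exact fun hm => hcon a ha hm)]
      have : π j ↑u = 1 := by
        have := hπL j (FreeMonoid.toList u)
        rw [FreeMonoid.ofList_toList] at this
        rw [this, hnone, FreeMonoid.ofList_nil, Con.coe_one]
      exact hj this
    exact Set.Finite.subset
      (Set.Finite.biUnion (List.finite_toSet _) fun a _ => hfin_letter a) hsubset
  refine ⟨hfin, ?_⟩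
  intro s t hst
  have hj : ∀ j, π j s = π j t := fun j =>
    congrFun (congrArg Subtype.val hst) j
  obtain ⟨u, rfl⟩ := hrep s
  obtain ⟨v, rfl⟩ := hrep t
  have hcon : ∀ j, ConGen.Rel (TraceRel (A' j) (fun x y => D' j x y))
      (FreeMonoid.ofList (projL j (FreeMonoid.toList u)))
      (FreeMonoid.ofList (projL j (FreeMonoid.toList v))) := by
    intro j
    have h1 := hπL j (FreeMonoid.toList u)
    have h2 := hπL j (FreeMonoid.toList v)
    rw [FreeMonoid.ofList_toList] at h1 h2
    have := (hj j)
    rw [h1, h2] at this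
    exact (traceCon (A' j) (fun x y => D' j x y)).eq.mp this
  have hpairs : ∀ a b, D a b →
      (FreeMonoid.toList u).filter (Aux12.pb a b) =
      (FreeMonoid.toList v).filter (Aux12.pb a b) := by
    intro a b hab
    obtain ⟨j, hj'⟩ := (hcoverD a b).mp hab
    have haj : a ∈ A' j := (hsupp j a b hj').1
    have hbj : b ∈ A' j := (hsupp j a b hj').2
    have hp : ∀ c d : A' j, ¬ D' j (c : A) (d : A) →
        ¬((Aux12.pb a b c.1) = true ∧ (Aux12.pb a b d.1) = true) := by
      rintro c d hcd ⟨hc, hd⟩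
      simp only [Aux12.pb, decide_eq_true_eq] at hc hd
      rcases hc with hc | hc <;> rcases hd with hd | hd
      · exact hcd (hc ▸ hd ▸ hrefl' j a haj)
      · exact hcd (hc ▸ hd ▸ hj')
      · exact hcd (hc ▸ hd ▸ hsymm' j a b hj')
      · exact hcd (hc ▸ hd ▸ hrefl' j b hbj)
    have hinv := Aux12.filter_invariant (D := fun x y : A' j => D' j x y)
      (fun c => Aux12.pb a b c.1) hp (hcon j)
    have hinv' : (projL j (FreeMonoid.toList u)).filter (fun c => Aux12.pb a b c.1) =
        (projL j (FreeMonoid.toList v)).filter (fun c => Aux12.pb a b c.1) := hinv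
    have hmem : ∀ c, Aux12.pb a b c = true → c ∈ A' j := by
      intro c hc
      simp only [Aux12.pb, decide_eq_true_eq] at hc
      rcases hc with rfl | rfl
      · exact haj
      · exact hbj
    have e1 := Aux12.projL_filter (A' j) (Aux12.pb a b) hmem (FreeMonoid.toList u)
    have e2 := Aux12.projL_filter (A' j) (Aux12.pb a b) hmem (FreeMonoid.toList v)
    rw [hprojL] at hinv'
    rw [← e1, ← e2, hinv']
  have hkey := Aux12.key hD_refl hD_symm (FreeMonoid.toList u)
    (FreeMonoid.toList v) hpairs
  have : (FreeMonoid.ofList (FreeMonoid.toList u) : TraceMonoid A D) =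
      FreeMonoid.ofList (FreeMonoid.toList v) := (traceCon A D).eq.mpr hkey
  rwa [FreeMonoid.ofList_toList, FreeMonoid.ofList_toList] at this
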